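/- Let G be a locally compact group and H ⊆ L²(G) a closed left-translation-invariant subspace consisting of continuous functions. Suppose there exists γ ∈ G such that the point evaluation f ↦ f(γ) is a continuous linear functional on H. Then there exists a unique function p ∈ H such that p = p ∗ p*, and the orthogonal projection of L²(G) onto H is given by f ↦ f ∗ p*. Moreover, every f ∈ H satisfies f(x) = ⟨f, L_x p⟩ for all x, and H consists of continuous functions vanishing at infinity. -/

import Mathlib

open MeasureTheory Filter
open scoped ENNReal Topology

/-- Left translation `L_x f (y) = f (x⁻¹ y)`. -/
def Ltrans {G : Type*} [Group G] (x : G) (f : G → ℂ) : G → ℂ := fun y => f (x⁻¹ * y)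

/-- The involution `f*(x) = conj (f (x⁻¹))`. -/
def invol {G : Type*} [Group G] (f : G → ℂ) : G → ℂ := fun x => (starRingEnd ℂ) (f x⁻¹)

/-- Convolution `(f ∗ g)(x) = ∫ f(y) g(y⁻¹ x) dy`. -/
noncomputable def conv {G : Type*} [Group G] [MeasurableSpace G]
    (μ : Measure G) (f g : G → ℂ) (x : G) : ℂ :=
  ∫ y, f y * g (y⁻¹ * x) ∂μ

section RKAux

open scoped Pointwise
set_option linter.unusedSectionVars false

variable {G : Type*} [Group G] [TopologicalSpace G] [IsTopologicalGroup G]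
    [LocallyCompactSpace G] [SecondCountableTopology G]
    [MeasurableSpace G] [BorelSpace G] {μ : Measure G} [μ.IsHaarMeasure]

lemma eLpNorm_Ltrans {f : G → ℂ} (hf : AEStronglyMeasurable f μ) (x : G) :
    eLpNorm (Ltrans x f) 2 μ = eLpNorm f 2 μ :=
  eLpNorm_comp_measurePreserving hf (measurePreserving_mul_left μ x⁻¹)

lemma memLp_Ltrans {f : G → ℂ} (hf : MemLp f 2 μ) (x : G) : MemLp (Ltrans x f) 2 μ :=
  ⟨hf.aestronglyMeasurable.comp_quasiMeasurePreserving
      (measurePreserving_mul_left μ x⁻¹).quasiMeasurePreserving,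
   by rw [eLpNorm_Ltrans hf.aestronglyMeasurable x]; exact hf.2⟩

lemma inner_toLp_toLp {g f : G → ℂ} (hg : MemLp g 2 μ) (hf : MemLp f 2 μ) :
    (inner ℂ (hg.toLp g) (hf.toLp f) : ℂ) = ∫ y, f y * (starRingEnd ℂ) (g y) ∂μ := by
  rw [MeasureTheory.L2.inner_def]
  refine integral_congr_ae ?_
  filter_upwards [hg.coeFn_toLp, hf.coeFn_toLp] with y h1 h2
  rw [RCLike.inner_apply, h1, h2, mul_comm]

lemma conv_invol_eq (f g : G → ℂ) (x : G) :
    conv μ f (invol g) x = ∫ y, f y * (starRingEnd ℂ) (g (x⁻¹ * y)) ∂μ := by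
  simp only [conv, invol, mul_inv_rev, inv_inv]

lemma conv_invol_eq' (f g : G → ℂ) (x : G) :
    conv μ f (invol g) x = ∫ y, f y * (starRingEnd ℂ) (Ltrans x g y) ∂μ := conv_invol_eq f g x

lemma conv_invol_conj (f g : G → ℂ) (x : G) :
    conv μ f (invol g) x = (starRingEnd ℂ) (conv μ g (invol f) x⁻¹) := by
  rw [conv_invol_eq, conv_invol_eq, ← integral_conj, inv_inv,
    ← integral_mul_left_eq_self (fun y => f y * (starRingEnd ℂ) (g (x⁻¹ * y))) x]
  refine integral_congr_ae (Filter.Eventually.of_forall fun y => ?_)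
  simp [inv_mul_cancel_left, map_mul, mul_comm]

lemma tendsto_conv_cocompact {f p : G → ℂ} (hf : MemLp f 2 μ) (hp : MemLp p 2 μ) :
    Tendsto (fun x => ∫ y, f y * (starRingEnd ℂ) (p (x⁻¹ * y)) ∂μ) (cocompact G) (𝓝 0) := by
  rw [Metric.tendsto_nhds]
  intro ε hε
  set Nf : ℝ := ‖hf.toLp f‖ with hNfdef
  have hNf : 0 ≤ Nf := norm_nonneg _
  obtain ⟨ψ, ψsupp, hψclose, ψcont, ψmem⟩ :=
    hp.exists_hasCompactSupport_eLpNorm_sub_le (by norm_num : (2:ℝ≥0∞) ≠ ∞)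
      (ε := ENNReal.ofReal (ε / (2 * (Nf + 1))))
      (by rw [Ne, ENNReal.ofReal_eq_zero, not_le]; positivity)
  set Nψ : ℝ := ‖ψmem.toLp ψ‖ with hNψdef
  have hNψ : 0 ≤ Nψ := norm_nonneg _
  obtain ⟨φ, φsupp, hφclose, φcont, φmem⟩ :=
    hf.exists_hasCompactSupport_eLpNorm_sub_le (by norm_num : (2:ℝ≥0∞) ≠ ∞)
      (ε := ENNReal.ofReal (ε / (2 * (Nψ + 1))))
      (by rw [Ne, ENNReal.ofReal_eq_zero, not_le]; positivity)
  have hK : IsCompact (tsupport φ * (tsupport ψ)⁻¹) := φsupp.mul ψsupp.inv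
  have hmem : (tsupport φ * (tsupport ψ)⁻¹)ᶜ ∈ cocompact G :=
    mem_cocompact.2 ⟨_, hK, Set.Subset.rfl⟩
  filter_upwards [hmem] with x hx
  rw [dist_zero_right]
  have hLp := memLp_Ltrans hp x
  have hLψ := memLp_Ltrans ψmem x
  have h1 : (inner ℂ (hLp.toLp (Ltrans x p)) (hf.toLp f) : ℂ)
      = ∫ y, f y * (starRingEnd ℂ) (p (x⁻¹ * y)) ∂μ := inner_toLp_toLp _ _
  have key : (∫ y, f y * (starRingEnd ℂ) (p (x⁻¹ * y)) ∂μ)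
      = inner ℂ (hLp.toLp (Ltrans x p) - hLψ.toLp (Ltrans x ψ)) (hf.toLp f)
        + inner ℂ (hLψ.toLp (Ltrans x ψ)) (hf.toLp f - φmem.toLp φ)
        + (inner ℂ (hLψ.toLp (Ltrans x ψ)) (φmem.toLp φ) : ℂ) := by
    rw [← h1, inner_sub_left, inner_sub_right]; ring
  have h0 : (inner ℂ (hLψ.toLp (Ltrans x ψ)) (φmem.toLp φ) : ℂ) = 0 := by
    rw [inner_toLp_toLp]
    have hzero : ∀ y, φ y * (starRingEnd ℂ) (Ltrans x ψ y) = 0 := by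
      intro y
      by_cases hφy : φ y = 0
      · simp [hφy]
      by_cases hψy : ψ (x⁻¹ * y) = 0
      · simp [Ltrans, hψy]
      exfalso
      apply hx
      have hy : y ∈ tsupport φ := subset_tsupport φ hφy
      have hz : (x⁻¹ * y)⁻¹ ∈ (tsupport ψ)⁻¹ := Set.inv_mem_inv.2 (subset_tsupport ψ hψy)
      have : y * (x⁻¹ * y)⁻¹ = x := by group
      simpa [this] using Set.mul_mem_mul hy hz
    rw [show (fun y => φ y * (starRingEnd ℂ) (Ltrans x ψ y)) = fun _ => (0:ℂ) from funext hzero]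
    simp
  rw [key, h0, add_zero]
  have hABnorm : ‖hLp.toLp (Ltrans x p) - hLψ.toLp (Ltrans x ψ)‖ ≤ ε / (2 * (Nf + 1)) := by
    rw [← MemLp.toLp_sub, Lp.norm_toLp,
      show Ltrans x p - Ltrans x ψ = Ltrans x (p - ψ) from rfl,
      eLpNorm_Ltrans (hp.sub ψmem).aestronglyMeasurable x]
    exact ENNReal.toReal_le_of_le_ofReal (by positivity) hψclose
  have hBnorm : ‖hLψ.toLp (Ltrans x ψ)‖ = Nψ := by
    rw [Lp.norm_toLp, eLpNorm_Ltrans ψmem.aestronglyMeasurable x, hNψdef, Lp.norm_toLp]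
  have huvnorm : ‖hf.toLp f - φmem.toLp φ‖ ≤ ε / (2 * (Nψ + 1)) := by
    rw [← MemLp.toLp_sub, Lp.norm_toLp]
    exact ENNReal.toReal_le_of_le_ofReal (by positivity) hφclose
  calc ‖(inner ℂ (hLp.toLp (Ltrans x p) - hLψ.toLp (Ltrans x ψ)) (hf.toLp f) : ℂ)
        + inner ℂ (hLψ.toLp (Ltrans x ψ)) (hf.toLp f - φmem.toLp φ)‖
      ≤ ‖(inner ℂ (hLp.toLp (Ltrans x p) - hLψ.toLp (Ltrans x ψ)) (hf.toLp f) : ℂ)‖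
        + ‖(inner ℂ (hLψ.toLp (Ltrans x ψ)) (hf.toLp f - φmem.toLp φ) : ℂ)‖ := norm_add_le _ _
    _ ≤ (ε / (2 * (Nf + 1))) * Nf + Nψ * (ε / (2 * (Nψ + 1))) := by
        refine add_le_add ?_ ?_
        · exact (norm_inner_le_norm _ _).trans
            (mul_le_mul hABnorm le_rfl (norm_nonneg _) (by positivity))
        · refine (norm_inner_le_norm _ _).trans ?_
          rw [hBnorm]
          exact mul_le_mul_of_nonneg_left huvnorm hNψ
    _ < ε := by
        have e1 : ε / (2 * (Nf + 1)) * (Nf + 1) = ε / 2 := by field_simp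
        have e2 : (Nψ + 1) * (ε / (2 * (Nψ + 1))) = ε / 2 := by field_simp
        have l1 : ε / (2 * (Nf + 1)) * Nf < ε / 2 := by
          rw [← e1]
          have : (0:ℝ) < ε / (2 * (Nf + 1)) := by positivity
          nlinarith
        have l2 : Nψ * (ε / (2 * (Nψ + 1))) < ε / 2 := by
          rw [← e2]
          have : (0:ℝ) < ε / (2 * (Nψ + 1)) := by positivity
          nlinarith
        linarith

end RKAux

set_option maxHeartbeats 1000000 in
/-- a closed left-invariant subspace `H ⊆ L²(G)` of continuous functions
with a continuous point evaluation has a unique reproducing kernel `p ∈ H` with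
`p = p ∗ p*`, the orthogonal projection onto `H` being `f ↦ f ∗ p*`; moreover every
`f ∈ H` satisfies `f(x) = ⟨f, L_x p⟩` and vanishes at infinity. -/
theorem reproducing_kernel_of_continuous_evaluation
    {G : Type*} [Group G] [TopologicalSpace G] [IsTopologicalGroup G]
    [LocallyCompactSpace G] [SecondCountableTopology G]
    [MeasurableSpace G] [BorelSpace G]
    (μ : Measure G) [μ.IsHaarMeasure]
    (H : Set (G → ℂ))
    -- H consists of continuous L² functions
    (hcont : ∀ f ∈ H, Continuous f) (hL2 : ∀ f ∈ H, MemLp f 2 μ)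
    -- H is a linear subspace
    (hzero : (0 : G → ℂ) ∈ H)
    (hadd : ∀ f ∈ H, ∀ g ∈ H, f + g ∈ H)
    (hsmul : ∀ (c : ℂ), ∀ f ∈ H, c • f ∈ H)
    -- H is left-invariant
    (hinv : ∀ (x : G), ∀ f ∈ H, Ltrans x f ∈ H)
    -- H is closed in L²(G): any L² limit of elements of H agrees a.e. with some member of H
    (hclosed : ∀ f : G → ℂ, MemLp f 2 μ →
      (∀ ε : ℝ, 0 < ε → ∃ g ∈ H, eLpNorm (f - g) 2 μ < ENNReal.ofReal ε) →
      ∃ g ∈ H, f =ᵐ[μ] g)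
    -- some point evaluation is a continuous linear functional on H
    (hev : ∃ γ : G, ∃ C : ℝ, ∀ f ∈ H, ‖f γ‖ ≤ C * (eLpNorm f 2 μ).toReal) :
    ∃ p : G → ℂ,
      (p ∈ H ∧ (∀ x, p x = conv μ p (invol p) x) ∧
        (∀ f : G → ℂ, MemLp f 2 μ → (conv μ f (invol p) ∈ H ∧
          ∀ h ∈ H, ∫ x, (f x - conv μ f (invol p) x) * (starRingEnd ℂ) (h x) ∂μ = 0))) ∧
      (∀ q : G → ℂ,
        (q ∈ H ∧ (∀ x, q x = conv μ q (invol q) x) ∧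
          (∀ f : G → ℂ, MemLp f 2 μ → (conv μ f (invol q) ∈ H ∧
            ∀ h ∈ H, ∫ x, (f x - conv μ f (invol q) x) * (starRingEnd ℂ) (h x) ∂μ = 0)))
        → q = p) ∧
      (∀ f ∈ H, ∀ x : G,
        f x = ∫ y, f y * (starRingEnd ℂ) (Ltrans x p y) ∂μ) ∧
      (∀ f ∈ H, Tendsto f (cocompact G) (𝓝 0)) := by
  obtain ⟨γ, C, hC⟩ := hev
  -- continuous representatives are unique
  have huniq : ∀ f ∈ H, ∀ g ∈ H, f =ᵐ[μ] g → f = g := fun f hf g hg h =>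
    ((hcont f hf).ae_eq_iff_eq μ (hcont g hg)).1 h
  -- evaluation at any point is bounded
  have hevx : ∀ x : G, ∀ f ∈ H, ‖f x‖ ≤ C * (eLpNorm f 2 μ).toReal := by
    intro x f hf
    have h1 := hC (Ltrans (γ * x⁻¹) f) (hinv _ f hf)
    rw [eLpNorm_Ltrans (hL2 f hf).aestronglyMeasurable] at h1
    simpa [Ltrans, mul_inv_rev, mul_assoc] using h1
  -- the submodule of L² determined by H
  let E : Submodule ℂ (Lp ℂ 2 μ) :=
    { carrier := {u : Lp ℂ 2 μ | ∃ f : G → ℂ, ∃ hf : f ∈ H, (hL2 f hf).toLp f = u}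
      zero_mem' := ⟨0, hzero, MemLp.toLp_zero _⟩
      add_mem' := by
        rintro a b ⟨f, hf, rfl⟩ ⟨g, hg, rfl⟩
        exact ⟨f + g, hadd f hf g hg, MemLp.toLp_add _ _⟩
      smul_mem' := by
        rintro c a ⟨f, hf, rfl⟩
        exact ⟨c • f, hsmul c f hf, MemLp.toLp_const_smul _ _⟩ }
  have hmemE_iff : ∀ u : Lp ℂ 2 μ, u ∈ E ↔
      ∃ f : G → ℂ, ∃ hf : f ∈ H, (hL2 f hf).toLp f = u := fun _ => Iff.rfl
  -- E is closed
  have hEclosed : IsClosed (E : Set (Lp ℂ 2 μ)) := by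
    refine isClosed_of_closure_subset fun u hu => ?_
    have hu2 : ∀ ε : ℝ, 0 < ε →
        ∃ g ∈ H, eLpNorm ((↑↑u : G → ℂ) - g) 2 μ < ENNReal.ofReal ε := by
      intro ε hε
      obtain ⟨v, hvE, hdist⟩ := Metric.mem_closure_iff.1 hu ε hε
      obtain ⟨g, hg, hgv⟩ := hvE
      refine ⟨g, hg, ?_⟩
      have h1 : (↑↑u : G → ℂ) - g =ᵐ[μ] ↑↑(u - v) := by
        have h2 : (↑↑v : G → ℂ) =ᵐ[μ] g := hgv ▸ (hL2 g hg).coeFn_toLp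
        filter_upwards [Lp.coeFn_sub u v, h2] with y e1 e2
        rw [Pi.sub_apply, e1]
        simp [e2]
      rw [eLpNorm_congr_ae h1,
        show eLpNorm (↑↑(u - v)) 2 μ = ENNReal.ofReal (dist u v) by
          rw [dist_eq_norm, Lp.norm_def, ENNReal.ofReal_toReal (Lp.eLpNorm_ne_top _)]]
      exact (ENNReal.ofReal_lt_ofReal_iff hε).2 hdist
    obtain ⟨g, hg, hae⟩ := hclosed _ (Lp.memLp u) hu2
    refine ⟨g, hg, ?_⟩
    rw [← Lp.toLp_coeFn u (Lp.memLp u)]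
    exact MemLp.toLp_congr _ _ hae.symm
  haveI : CompleteSpace E := hEclosed.completeSpace_coe
  -- representatives
  let rep : E → (G → ℂ) := fun u => ((hmemE_iff _).1 u.2).choose
  have hrep_mem : ∀ u : E, rep u ∈ H := fun u => ((hmemE_iff _).1 u.2).choose_spec.choose
  have hrep_toLp : ∀ u : E, (hL2 (rep u) (hrep_mem u)).toLp (rep u) = (u : Lp ℂ 2 μ) :=
    fun u => ((hmemE_iff _).1 u.2).choose_spec.choose_spec
  have hrep_ae : ∀ u : E, (↑↑(↑u : Lp ℂ 2 μ) : G → ℂ) =ᵐ[μ] rep u :=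
    fun u => (hrep_toLp u) ▸ (hL2 (rep u) (hrep_mem u)).coeFn_toLp
  have hrep_eq : ∀ (u : E) (f : G → ℂ), f ∈ H →
      ((↑↑(↑u : Lp ℂ 2 μ) : G → ℂ) =ᵐ[μ] f) → rep u = f := by
    intro u f hf h
    exact huniq (rep u) (hrep_mem u) f hf ((hrep_ae u).symm.trans h)
  have hrep_add : ∀ u v : E, rep (u + v) = rep u + rep v := by
    intro u v
    refine hrep_eq (u + v) _ (hadd _ (hrep_mem u) _ (hrep_mem v)) ?_
    filter_upwards [Lp.coeFn_add (↑u : Lp ℂ 2 μ) ↑v, hrep_ae u, hrep_ae v] with y e1 e2 e3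
    rw [Pi.add_apply,
      show (↑↑(↑(u + v) : Lp ℂ 2 μ) : G → ℂ) y
        = ((↑↑(↑u : Lp ℂ 2 μ) : G → ℂ) + (↑↑(↑v : Lp ℂ 2 μ) : G → ℂ)) y from e1]
    simp [e2, e3]
  have hrep_smul : ∀ (c : ℂ) (u : E), rep (c • u) = c • rep u := by
    intro c u
    refine hrep_eq (c • u) _ (hsmul c _ (hrep_mem u)) ?_
    filter_upwards [Lp.coeFn_smul c (↑u : Lp ℂ 2 μ), hrep_ae u] with y e1 e2
    rw [Pi.smul_apply,
      show (↑↑(↑(c • u) : Lp ℂ 2 μ) : G → ℂ) y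
        = (c • (↑↑(↑u : Lp ℂ 2 μ) : G → ℂ)) y from e1]
    simp [e2]
  -- the evaluation functional at 1
  have hbound : ∀ u : E, ‖rep u 1‖ ≤ C * ‖(↑u : Lp ℂ 2 μ)‖ := by
    intro u
    have h1 := hevx 1 (rep u) (hrep_mem u)
    rwa [show eLpNorm (rep u) 2 μ = eLpNorm (↑↑(↑u : Lp ℂ 2 μ)) 2 μ from
      eLpNorm_congr_ae (hrep_ae u).symm, ← Lp.norm_def] at h1
  let evlin : E →ₗ[ℂ] ℂ :=
    { toFun := fun u => rep u 1
      map_add' := fun u v => by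
        show rep (u + v) 1 = rep u 1 + rep v 1
        rw [hrep_add u v]; rfl
      map_smul' := fun c u => by
        show rep (c • u) 1 = c * rep u 1
        rw [hrep_smul c u]; rfl }
  let ev1 : E →L[ℂ] ℂ := LinearMap.mkContinuous evlin C hbound
  let pE : E := (InnerProductSpace.toDual ℂ E).symm ev1
  set p : G → ℂ := rep pE with hp_def
  have hpmem : p ∈ H := hrep_mem pE
  have hpE_coe : (↑pE : Lp ℂ 2 μ) = (hL2 p hpmem).toLp p := (hrep_toLp pE).symm
  -- reproducing property at the identity
  have hrepro1 : ∀ f : G → ℂ, ∀ hf : f ∈ H, f 1 = ∫ y, f y * (starRingEnd ℂ) (p y) ∂μ := by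
    intro f hf
    have hmemf : (hL2 f hf).toLp f ∈ E := ⟨f, hf, rfl⟩
    set uf : E := ⟨(hL2 f hf).toLp f, hmemf⟩ with huf_def
    have h1 : rep uf = f := hrep_eq uf f hf (hL2 f hf).coeFn_toLp
    have h2 : (inner ℂ pE uf : ℂ) = ev1 uf := InnerProductSpace.toDual_symm_apply
    have h3 : ev1 uf = f 1 := by
      show rep uf 1 = f 1
      rw [h1]
    have h4 : (inner ℂ pE uf : ℂ) = inner ℂ ((↑pE : Lp ℂ 2 μ)) ((↑uf : Lp ℂ 2 μ)) :=
      Submodule.coe_inner E pE uf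
    have h5 : (inner ℂ ((↑pE : Lp ℂ 2 μ)) ((↑uf : Lp ℂ 2 μ)) : ℂ)
        = ∫ y, f y * (starRingEnd ℂ) (p y) ∂μ := by
      rw [hpE_coe, show ((↑uf : Lp ℂ 2 μ)) = (hL2 f hf).toLp f from rfl]
      exact inner_toLp_toLp (hL2 p hpmem) (hL2 f hf)
    rw [← h3, ← h2, h4, h5]
  -- reproducing property everywhere
  have hrepro : ∀ f : G → ℂ, ∀ _ : f ∈ H, ∀ x : G,
      f x = ∫ y, f y * (starRingEnd ℂ) (p (x⁻¹ * y)) ∂μ := by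
    intro f hf x
    have h1 := hrepro1 (Ltrans x⁻¹ f) (hinv x⁻¹ f hf)
    have h2 : (Ltrans x⁻¹ f) 1 = f x := by simp [Ltrans]
    have h3 := integral_mul_left_eq_self (μ := μ) (fun y => f y * (starRingEnd ℂ) (p (x⁻¹ * y))) x
    rw [← h3, ← h2, h1]
    refine integral_congr_ae (Filter.Eventually.of_forall fun y => ?_)
    simp [Ltrans, inv_mul_cancel_left]
  have hppL2 : MemLp p 2 μ := hL2 p hpmem
  have hreproL : ∀ f : G → ℂ, ∀ _ : f ∈ H, ∀ x : G,
      f x = ∫ y, f y * (starRingEnd ℂ) (Ltrans x p y) ∂μ := hrepro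
  -- the projection property
  have hproj : ∀ f : G → ℂ, MemLp f 2 μ → (conv μ f (invol p) ∈ H ∧
      ∀ h ∈ H, ∫ x, (f x - conv μ f (invol p) x) * (starRingEnd ℂ) (h x) ∂μ = 0) := by
    intro f hfL2
    set u : Lp ℂ 2 μ := hfL2.toLp f with hu_def
    set Pu : E := E.orthogonalProjectionOnto u with hPu_def
    set g : G → ℂ := rep Pu with hg_def
    have hgH : g ∈ H := hrep_mem Pu
    have hgtoLp : (hL2 g hgH).toLp g = (↑Pu : Lp ℂ 2 μ) := hrep_toLp Pu
    have hsubmem : u - ↑Pu ∈ Eᗮ := E.sub_starProjection_mem_orthogonal u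
    -- conv equals g pointwise
    have hconv_eq_g : ∀ x, conv μ f (invol p) x = g x := by
      intro x
      have ha : conv μ f (invol p) x
          = inner ℂ ((memLp_Ltrans hppL2 x).toLp (Ltrans x p)) u := by
        rw [conv_invol_eq', hu_def, inner_toLp_toLp (memLp_Ltrans hppL2 x) hfL2]
      have hb : g x = inner ℂ ((memLp_Ltrans hppL2 x).toLp (Ltrans x p)) (↑Pu : Lp ℂ 2 μ) := by
        rw [← hgtoLp, inner_toLp_toLp (memLp_Ltrans hppL2 x) (hL2 g hgH)]
        exact hreproL g hgH x
      have hmemT : (memLp_Ltrans hppL2 x).toLp (Ltrans x p) ∈ E :=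
        ⟨Ltrans x p, hinv x p hpmem, rfl⟩
      have h0 : (inner ℂ ((memLp_Ltrans hppL2 x).toLp (Ltrans x p)) (u - ↑Pu) : ℂ) = 0 :=
        hsubmem _ hmemT
      rw [inner_sub_right] at h0
      rw [ha, hb]
      exact sub_eq_zero.1 h0
    have hconvH : conv μ f (invol p) ∈ H := by
      rw [show conv μ f (invol p) = g from funext hconv_eq_g]
      exact hgH
    refine ⟨hconvH, ?_⟩
    intro h hh
    have hz : (inner ℂ ((hfL2.sub (hL2 g hgH)).toLp (f - g)) ((hL2 h hh).toLp h) : ℂ) = 0 := by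
      rw [MemLp.toLp_sub hfL2 (hL2 g hgH), hgtoLp]
      exact (Submodule.mem_orthogonal' E _).1 hsubmem _ ⟨h, hh, rfl⟩
    have hinner : (inner ℂ ((hfL2.sub (hL2 g hgH)).toLp (f - g)) ((hL2 h hh).toLp h) : ℂ)
        = ∫ x, h x * (starRingEnd ℂ) ((f - g) x) ∂μ := inner_toLp_toLp _ _
    calc ∫ x, (f x - conv μ f (invol p) x) * (starRingEnd ℂ) (h x) ∂μ
        = ∫ x, (starRingEnd ℂ) (h x * (starRingEnd ℂ) ((f - g) x)) ∂μ := by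
          refine integral_congr_ae (Filter.Eventually.of_forall fun x => ?_)
          simp only [hconv_eq_g x]
          simp [map_mul, mul_comm]
      _ = (starRingEnd ℂ) (∫ x, h x * (starRingEnd ℂ) ((f - g) x) ∂μ) := integral_conj
      _ = 0 := by rw [← hinner, hz, map_zero]
  -- self-reproducing kernel
  have hpp : ∀ x, p x = conv μ p (invol p) x := by
    intro x
    rw [conv_invol_eq]
    exact hrepro p hpmem x
  -- subtraction stability of H
  have hHsub : ∀ f ∈ H, ∀ g ∈ H, (fun x => f x - g x) ∈ H := by
    intro f hf g hg
    have h1 := hadd f hf ((-1 : ℂ) • g) (hsmul (-1) g hg)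
    have h2 : f + (-1 : ℂ) • g = fun x => f x - g x := by
      funext x
      simp [sub_eq_add_neg]
    rwa [h2] at h1
  -- inner self zero
  have hself : ∀ d : G → ℂ, d ∈ H → (∫ x, d x * (starRingEnd ℂ) (d x) ∂μ) = 0 →
      ∀ x, d x = 0 := by
    intro d hd hint x
    have hD := hL2 d hd
    have h1 : (inner ℂ (hD.toLp d) (hD.toLp d) : ℂ) = 0 := by
      rw [inner_toLp_toLp hD hD]
      exact hint
    have h2 : hD.toLp d = 0 := inner_self_eq_zero.1 h1
    have h3 : d =ᵐ[μ] 0 := by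
      have h4 := hD.coeFn_toLp
      rw [h2] at h4
      exact h4.symm.trans (Lp.coeFn_zero ℂ 2 μ)
    rw [huniq d hd 0 hzero h3]
    rfl
  refine ⟨p, ⟨hpmem, hpp, hproj⟩, ?_, ?_, ?_⟩
  · -- uniqueness
    rintro q ⟨hqH, -, hqproj⟩
    obtain ⟨hpq_mem, hpq_orth⟩ := hqproj p (hL2 p hpmem)
    have hdH : (fun x => p x - conv μ p (invol q) x) ∈ H := hHsub p hpmem _ hpq_mem
    have hd0 : ∀ x, p x - conv μ p (invol q) x = 0 :=
      hself _ hdH (hpq_orth _ hdH)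
    have hpq : ∀ x, p x = conv μ p (invol q) x := fun x => sub_eq_zero.1 (hd0 x)
    obtain ⟨hqp_mem, hqp_orth⟩ := hproj q (hL2 q hqH)
    have hdH' : (fun x => q x - conv μ q (invol p) x) ∈ H := hHsub q hqH _ hqp_mem
    have hd0' : ∀ x, q x - conv μ q (invol p) x = 0 :=
      hself _ hdH' (hqp_orth _ hdH')
    have hqp : ∀ x, q x = conv μ q (invol p) x := fun x => sub_eq_zero.1 (hd0' x)
    funext x
    have e2 : p x = (starRingEnd ℂ) (p x⁻¹) := by
      rw [hpp x, conv_invol_conj, ← hpp x⁻¹]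
    rw [hqp x, conv_invol_conj, ← hpq x⁻¹, ← e2]
  · -- reproducing formula
    intro f hf x
    have := hrepro f hf x
    simpa [Ltrans] using this
  · -- vanishing at infinity
    intro f hf
    exact (tendsto_conv_cocompact (hL2 f hf) (hL2 p hpmem)).congr
      (fun x => (hrepro f hf x).symm)
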